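/- arXiv:2006.05450 — 4 statements merged into one kernel-verified Lean document; each statement's English description precedes it below -/
import Mathlib

section
/- Let ζ > 0 and let α : ℝ → ℝ satisfy the wheeled inverted pendulum equation on the horizontal, (ζ sin²(α) + 2) α'' = (ζ + 2) sin(α) − (ζ/2) (α')² sin(2α). Then the quantity E₀(τ) = (α')² + (ζ+2) cos(α) + (ζ/2)(α')² sin²(α) is constant in τ. -/
open Real

/-- Conservation law for the WIP on the horizontal. -/
theorem wip_horizontal_energy_conserved (ζ : ℝ) (hζ : 0 < ζ) (α : ℝ → ℝ)
    (hα : ContDiff ℝ 2 α)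
    (heq : ∀ τ : ℝ,
      (ζ * Real.sin (α τ) ^ 2 + 2) * deriv (deriv α) τ =
        (ζ + 2) * Real.sin (α τ)
          - ζ / 2 * (deriv α τ) ^ 2 * Real.sin (2 * α τ)) :
    ∀ τ₁ τ₂ : ℝ,
      (deriv α τ₁) ^ 2 + (ζ + 2) * Real.cos (α τ₁)
          + ζ / 2 * (deriv α τ₁) ^ 2 * Real.sin (α τ₁) ^ 2 =
      (deriv α τ₂) ^ 2 + (ζ + 2) * Real.cos (α τ₂)
          + ζ / 2 * (deriv α τ₂) ^ 2 * Real.sin (α τ₂) ^ 2 := by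
  have h2 : ContDiff ℝ (1 + 1 : ℕ) α := by exact_mod_cast hα
  have hd : Differentiable ℝ α := hα.differentiable (by norm_num)
  have hda : Differentiable ℝ (deriv α) :=
    (((contDiff_succ_iff_deriv (n := 1)).mp (by exact_mod_cast h2)).2.2.differentiable one_ne_zero)
  set E : ℝ → ℝ := fun τ =>
    (deriv α τ) ^ 2 + (ζ + 2) * Real.cos (α τ)
      + ζ / 2 * (deriv α τ) ^ 2 * Real.sin (α τ) ^ 2 with hE
  have key : ∀ τ : ℝ, HasDerivAt E 0 τ := by
    intro τ
    have hA : HasDerivAt α (deriv α τ) τ := (hd τ).hasDerivAt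
    have hA' : HasDerivAt (deriv α) (deriv (deriv α) τ) τ := (hda τ).hasDerivAt
    have hsin : HasDerivAt (fun t => Real.sin (α t))
        (Real.cos (α τ) * deriv α τ) τ := (Real.hasDerivAt_sin (α τ)).comp τ hA
    have hcos : HasDerivAt (fun t => Real.cos (α t))
        (-Real.sin (α τ) * deriv α τ) τ := (Real.hasDerivAt_cos (α τ)).comp τ hA
    have h1 : HasDerivAt (fun t => (deriv α t) ^ 2)
        (2 * deriv α τ * deriv (deriv α) τ) τ := by
      have := hA'.pow 2
      simpa [Pi.pow_def, mul_comm, mul_assoc, mul_left_comm] using this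
    have h2' : HasDerivAt (fun t => Real.sin (α t) ^ 2)
        (2 * Real.sin (α τ) * (Real.cos (α τ) * deriv α τ)) τ := by
      have := hsin.pow 2
      simpa [Pi.pow_def, mul_comm, mul_assoc, mul_left_comm] using this
    have hD : HasDerivAt E
        (2 * deriv α τ * deriv (deriv α) τ
          + (ζ + 2) * (-Real.sin (α τ) * deriv α τ)
          + (ζ / 2 * (2 * deriv α τ * deriv (deriv α) τ) * Real.sin (α τ) ^ 2
            + ζ / 2 * (deriv α τ) ^ 2
              * (2 * Real.sin (α τ) * (Real.cos (α τ) * deriv α τ)))) τ := by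
      have := (h1.add ((hcos.const_mul (ζ + 2)))).add
        (((h1.const_mul (ζ / 2)).mul h2'))
      simpa [hE, Pi.add_def, Pi.mul_def, mul_comm, mul_assoc, mul_left_comm] using this
    have heqτ := heq τ
    rw [Real.sin_two_mul] at heqτ
    convert hD using 1
    linear_combination (- deriv α τ) * heqτ
  have hcon : ∀ τ₁ τ₂ : ℝ, E τ₁ = E τ₂ := by
    intro τ₁ τ₂
    exact is_const_of_deriv_eq_zero (fun x => (key x).differentiableAt)
      (fun x => (key x).deriv) τ₁ τ₂
  exact hcon
end

section
/- Let ζ > 0, ε : ℝ, and let α : ℝ → ℝ satisfy the wheeled inverted pendulum equation on the inclined line, (ζ sin²(ε−α) + 2) α'' = (2+ζ) sin(α) + sin(ε) cos(ε−α) + (ζ/2) (α')² sin(2(ε−α)). Then E_ε(τ) = (α')² + (ζ+2) cos(α) + sin(ε) sin(ε−α) + (ζ/2)(α')² sin²(ε−α) is constant in τ. -/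
open Real

/-- Conservation law for the WIP on the inclined line. -/
theorem wip_inclined_energy_conserved (ζ ε : ℝ) (hζ : 0 < ζ) (α : ℝ → ℝ)
    (hα : ContDiff ℝ 2 α)
    (heq : ∀ τ : ℝ,
      (ζ * Real.sin (ε - α τ) ^ 2 + 2) * deriv (deriv α) τ =
        (2 + ζ) * Real.sin (α τ) + Real.sin ε * Real.cos (ε - α τ)
          + ζ / 2 * (deriv α τ) ^ 2 * Real.sin (2 * (ε - α τ))) :
    ∀ τ₁ τ₂ : ℝ,
      (deriv α τ₁) ^ 2 + (ζ + 2) * Real.cos (α τ₁)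
          + Real.sin ε * Real.sin (ε - α τ₁)
          + ζ / 2 * (deriv α τ₁) ^ 2 * Real.sin (ε - α τ₁) ^ 2 =
      (deriv α τ₂) ^ 2 + (ζ + 2) * Real.cos (α τ₂)
          + Real.sin ε * Real.sin (ε - α τ₂)
          + ζ / 2 * (deriv α τ₂) ^ 2 * Real.sin (ε - α τ₂) ^ 2 := by
  have hd1 : ∀ τ, HasDerivAt α (deriv α τ) τ := fun τ =>
    ((hα.differentiable (by norm_num)).differentiableAt).hasDerivAt
  have hd2 : ∀ τ, HasDerivAt (deriv α) (deriv (deriv α) τ) τ := by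
    intro τ
    have : Differentiable ℝ (deriv α) := by
      have h2 : ContDiff ℝ ((1:ℕ)+1) α := by exact_mod_cast hα
      exact (contDiff_succ_iff_deriv.mp h2).2.2.differentiable (by norm_num)
    exact (this τ).hasDerivAt
  set E : ℝ → ℝ := fun τ =>
      (deriv α τ) ^ 2 + (ζ + 2) * Real.cos (α τ)
        + Real.sin ε * Real.sin (ε - α τ)
        + ζ / 2 * (deriv α τ) ^ 2 * Real.sin (ε - α τ) ^ 2 with hE
  have hE' : ∀ τ, HasDerivAt E 0 τ := by
    intro τ
    have h1 : HasDerivAt (fun τ => ε - α τ) (-(deriv α τ)) τ :=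
      (hasDerivAt_const τ ε).sub (hd1 τ) |>.congr_deriv (by ring)
    have hsin : HasDerivAt (fun τ => Real.sin (ε - α τ))
        (Real.cos (ε - α τ) * -(deriv α τ)) τ := h1.sin
    have hcos : HasDerivAt (fun τ => Real.cos (α τ))
        (-Real.sin (α τ) * deriv α τ) τ := (hd1 τ).cos
    have hv2 : HasDerivAt (fun τ => (deriv α τ) ^ 2)
        (2 * deriv α τ * deriv (deriv α) τ) τ := by
      have := (hd2 τ).fun_pow 2
      simpa using this
    have hs2 : HasDerivAt (fun τ => Real.sin (ε - α τ) ^ 2)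
        (2 * Real.sin (ε - α τ) * (Real.cos (ε - α τ) * -(deriv α τ))) τ := by
      have := hsin.fun_pow 2
      simpa [mul_assoc] using this
    have h : HasDerivAt E
        (2 * deriv α τ * deriv (deriv α) τ
          + (ζ + 2) * (-Real.sin (α τ) * deriv α τ)
          + Real.sin ε * (Real.cos (ε - α τ) * -(deriv α τ))
          + ζ / 2 * ((2 * deriv α τ * deriv (deriv α) τ) * Real.sin (ε - α τ) ^ 2
              + (deriv α τ) ^ 2 * (2 * Real.sin (ε - α τ) * (Real.cos (ε - α τ) * -(deriv α τ))))) τ := by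
      have hh := ((hv2.add (hcos.const_mul (ζ + 2))).add (hsin.const_mul (Real.sin ε))).add
        ((hv2.mul hs2).const_mul (ζ / 2))
      have hfun : E =ᶠ[nhds τ] (fun x => deriv α x ^ 2 + (ζ + 2) * Real.cos (α x)
          + Real.sin ε * Real.sin (ε - α x)
          + ζ / 2 * (deriv α x ^ 2 * Real.sin (ε - α x) ^ 2)) :=
        Filter.Eventually.of_forall fun x => by simp only [hE]; ring
      exact (hh.congr_of_eventuallyEq hfun).congr_deriv (by ring)
    convert h using 1
    have heqτ := heq τ
    have hs2m : Real.sin (2 * (ε - α τ)) =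
        2 * Real.sin (ε - α τ) * Real.cos (ε - α τ) := Real.sin_two_mul _
    linear_combination (-(deriv α τ)) * heqτ - ζ / 2 * (deriv α τ) ^ 3 * hs2m
  have hconst : ∀ τ₁ τ₂, E τ₁ = E τ₂ := by
    intro τ₁ τ₂
    have : E = fun _ => E 0 := by
      funext x
      exact is_const_of_deriv_eq_zero (fun τ => (hE' τ).differentiableAt)
        (fun τ => (hE' τ).deriv) x 0
    rw [this]
  exact hconst
end

section
/- Let ζ, ρ, k₁, k₂ > 0 and let α : ℝ → ℝ satisfy the controlled WIP equation on the horizontal with PD control h = k₁α + k₂α': (ζ sin²(α)+2) α'' = (ζ+2) sin(α) − (ζ/2)(α')² sin(2α) − 2(cos(α)/ρ + (1+2/ζ)ρ)(k₁α + k₂α'). Then the Lyapunov function 𝓔₀(τ) = (1 + (ζ/2) sin²(α)) (α')² + (ζ+2) cos(α) + k₁( (2/ρ)(α sin(α) + cos(α)) + α² ρ (1+2/ζ) ) satisfies d𝓔₀/dτ = −2 k₂ (α')² ( (1+2/ζ)ρ + cos(α)/ρ ). -/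
open Real

/-- Derivative of the Lyapunov function for the PD-controlled WIP on the
horizontal. -/
theorem wip_horizontal_lyapunov_deriv (ζ ρ k₁ k₂ : ℝ)
    (hζ : 0 < ζ) (hρ : 0 < ρ) (hk₁ : 0 < k₁) (hk₂ : 0 < k₂)
    (α : ℝ → ℝ) (hα : ContDiff ℝ 2 α)
    (heq : ∀ τ : ℝ,
      (ζ * Real.sin (α τ) ^ 2 + 2) * deriv (deriv α) τ =
        (ζ + 2) * Real.sin (α τ)
          - ζ / 2 * (deriv α τ) ^ 2 * Real.sin (2 * α τ)
          - 2 * (Real.cos (α τ) / ρ + (1 + 2 / ζ) * ρ)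
              * (k₁ * α τ + k₂ * deriv α τ)) :
    ∀ τ : ℝ,
      deriv (fun t =>
        (1 + ζ / 2 * Real.sin (α t) ^ 2) * (deriv α t) ^ 2
          + (ζ + 2) * Real.cos (α t)
          + k₁ * (2 / ρ * (α t * Real.sin (α t) + Real.cos (α t))
              + (α t) ^ 2 * ρ * (1 + 2 / ζ))) τ =
      -2 * k₂ * (deriv α τ) ^ 2
        * ((1 + 2 / ζ) * ρ + Real.cos (α τ) / ρ) := by
  have hsplit := contDiff_succ_iff_deriv.mp
    (show ContDiff ℝ ((1 : ℕ) + 1) α by exact_mod_cast hα)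
  have hda : Differentiable ℝ α := hsplit.1
  have hdda : Differentiable ℝ (deriv α) := hsplit.2.2.differentiable (by simp)
  intro τ
  have hd1 : HasDerivAt α (deriv α τ) τ := (hda τ).hasDerivAt
  have hd2 : HasDerivAt (deriv α) (deriv (deriv α) τ) τ := (hdda τ).hasDerivAt
  have hsin : HasDerivAt (fun t => Real.sin (α t)) (Real.cos (α τ) * deriv α τ) τ :=
    (Real.hasDerivAt_sin (α τ)).comp τ hd1
  have hcos : HasDerivAt (fun t => Real.cos (α t)) (-Real.sin (α τ) * deriv α τ) τ :=
    (Real.hasDerivAt_cos (α τ)).comp τ hd1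
  have H := ((((((hsin.pow 2).const_mul (ζ / 2)).const_add 1).mul (hd2.pow 2)).add
      (hcos.const_mul (ζ + 2))).add
      (((((hd1.mul hsin).add hcos).const_mul (2 / ρ)).add
        (((hd1.pow 2).mul_const ρ).mul_const (1 + 2 / ζ))).const_mul k₁))
  rw [HasDerivAt.deriv (by exact H)]
  simp only [Pi.pow_apply]
  push_cast
  have key := heq τ
  rw [Real.sin_two_mul] at key
  linear_combination (deriv α τ) * key
end

section
/- Let ζ, ρ > 0 with 2k₁ρ²(ζ+2) + 2k₁ζ − ζρ(ζ+2) > 0 (i.e. condition (13) holds). Then α = 0 is a strict local minimum of the function V(α) = (ζ+2) cos(α) + k₁((2/ρ)(α sin α + cos α) + α² ρ (1+2/ζ)). -/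
open Real

private lemma wip_hasDerivAt_V (ζ ρ k₁ x : ℝ) :
    HasDerivAt (fun α : ℝ =>
        (ζ + 2) * Real.cos α
          + k₁ * (2 / ρ * (α * Real.sin α + Real.cos α)
              + α ^ 2 * ρ * (1 + 2 / ζ)))
      (-(ζ + 2) * Real.sin x
        + k₁ * (2 / ρ * (x * Real.cos x) + 2 * x * ρ * (1 + 2 / ζ))) x := by
  have h1 : HasDerivAt (fun α : ℝ => α * Real.sin α + Real.cos α)
      (1 * Real.sin x + x * Real.cos x + -Real.sin x) x :=
    ((hasDerivAt_id x).mul (Real.hasDerivAt_sin x)).add (Real.hasDerivAt_cos x)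
  have h2 : HasDerivAt (fun α : ℝ => α ^ 2 * ρ * (1 + 2 / ζ))
      ((2 : ℕ) * x ^ 1 * ρ * (1 + 2 / ζ)) x :=
    ((hasDerivAt_pow 2 x).mul_const ρ).mul_const (1 + 2 / ζ)
  have h := ((Real.hasDerivAt_cos x).const_mul (ζ + 2)).add
    (((h1.const_mul (2 / ρ)).add h2).const_mul k₁)
  refine h.congr_deriv ?_
  push_cast
  ring

private lemma wip_sin_mul_lower {x : ℝ} (hx : x ≠ 0) (hx1 : |x| ≤ 1) :
    x ^ 2 - x ^ 4 / 4 < x * Real.sin x := by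
  rcases hx.lt_or_gt with h | h
  · have h1 : (0:ℝ) < -x := by linarith
    have h2 : -x ≤ 1 := by rw [abs_of_neg h] at hx1; exact hx1
    have := Real.sin_gt_sub_cube h1
    rw [Real.sin_neg] at this
    nlinarith
  · have h2 : x ≤ 1 := by rw [abs_of_pos h] at hx1; exact hx1
    have := Real.sin_gt_sub_cube h
    nlinarith

/-- Under condition (13), `α = 0` is a strict local minimum of the potential
part of the Lyapunov function. -/
theorem wip_horizontal_potential_strict_local_min (ζ ρ k₁ : ℝ)
    (hζ : 0 < ζ) (hρ : 0 < ρ) (hk₁ : 0 < k₁)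
    (hcond : 2 * k₁ * ρ ^ 2 * (ζ + 2) + 2 * k₁ * ζ - ζ * ρ * (ζ + 2) > 0) :
    deriv (fun α : ℝ =>
        (ζ + 2) * Real.cos α
          + k₁ * (2 / ρ * (α * Real.sin α + Real.cos α)
              + α ^ 2 * ρ * (1 + 2 / ζ))) 0 = 0 ∧
    0 < deriv (deriv (fun α : ℝ =>
        (ζ + 2) * Real.cos α
          + k₁ * (2 / ρ * (α * Real.sin α + Real.cos α)
              + α ^ 2 * ρ * (1 + 2 / ζ)))) 0 ∧
    ∃ δ > 0, ∀ α : ℝ, α ≠ 0 → |α| < δ →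
      (ζ + 2) * Real.cos 0
          + k₁ * (2 / ρ * ((0 : ℝ) * Real.sin 0 + Real.cos 0)
              + (0 : ℝ) ^ 2 * ρ * (1 + 2 / ζ)) <
      (ζ + 2) * Real.cos α
          + k₁ * (2 / ρ * (α * Real.sin α + Real.cos α)
              + α ^ 2 * ρ * (1 + 2 / ζ)) := by
  have hd : deriv (fun α : ℝ =>
        (ζ + 2) * Real.cos α
          + k₁ * (2 / ρ * (α * Real.sin α + Real.cos α)
              + α ^ 2 * ρ * (1 + 2 / ζ)))
      = fun x : ℝ => -(ζ + 2) * Real.sin x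
        + k₁ * (2 / ρ * (x * Real.cos x) + 2 * x * ρ * (1 + 2 / ζ)) := by
    funext x
    exact (wip_hasDerivAt_V ζ ρ k₁ x).deriv
  -- second derivative value
  have hT : (0:ℝ) < -(ζ + 2) + k₁ * (2 / ρ + 2 * ρ * (1 + 2 / ζ)) := by
    have key : (-(ζ + 2) + k₁ * (2 / ρ + 2 * ρ * (1 + 2 / ζ))) * (ρ * ζ)
        = 2 * k₁ * ρ ^ 2 * (ζ + 2) + 2 * k₁ * ζ - ζ * ρ * (ζ + 2) := by
      field_simp
      ring
    have hpos : 0 < (-(ζ + 2) + k₁ * (2 / ρ + 2 * ρ * (1 + 2 / ζ))) * (ρ * ζ) := by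
      rw [key]; exact hcond
    nlinarith [mul_pos hρ hζ]
  refine ⟨?_, ?_, ?_⟩
  · rw [hd]; simp
  · rw [hd]
    have h2 : HasDerivAt (fun x : ℝ => -(ζ + 2) * Real.sin x
        + k₁ * (2 / ρ * (x * Real.cos x) + 2 * ρ * (1 + 2 / ζ) * x))
        (-(ζ + 2) * Real.cos 0
          + k₁ * (2 / ρ * (1 * Real.cos 0 + 0 * -Real.sin 0) + 2 * ρ * (1 + 2 / ζ) * 1)) 0 := by
      exact ((Real.hasDerivAt_sin 0).const_mul (-(ζ+2))).add
        ((((hasDerivAt_id 0).mul (Real.hasDerivAt_cos 0)).const_mul (2/ρ)).add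
          ((hasDerivAt_id 0).const_mul (2 * ρ * (1 + 2 / ζ))) |>.const_mul k₁)
    have heq : (fun x : ℝ => -(ζ + 2) * Real.sin x
        + k₁ * (2 / ρ * (x * Real.cos x) + 2 * x * ρ * (1 + 2 / ζ)))
        = (fun x : ℝ => -(ζ + 2) * Real.sin x
        + k₁ * (2 / ρ * (x * Real.cos x) + 2 * ρ * (1 + 2 / ζ) * x)) := by
      funext x; ring
    rw [heq, h2.deriv]
    simp only [Real.cos_zero, Real.sin_zero]
    nlinarith
  · -- strict local min
    set D : ℝ := 2 * k₁ * ρ ^ 2 * (ζ + 2) + 2 * k₁ * ζ - ζ * ρ * (ζ + 2) with hD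
    have hDpos : 0 < D := hcond
    refine ⟨min 1 (Real.sqrt (D / (k₁ * ζ))), lt_min one_pos
      (Real.sqrt_pos.mpr (by positivity)), ?_⟩
    intro α hα hαδ
    have hα1 : |α| ≤ 1 := le_of_lt (lt_of_lt_of_le hαδ (min_le_left _ _))
    have hαs : |α| < Real.sqrt (D / (k₁ * ζ)) := lt_of_lt_of_le hαδ (min_le_right _ _)
    have hα2 : α ^ 2 < D / (k₁ * ζ) := by
      have h0 : Real.sqrt (D / (k₁ * ζ)) ^ 2 = D / (k₁ * ζ) :=
        Real.sq_sqrt (le_of_lt (by positivity))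
      calc α ^ 2 = |α| ^ 2 := (sq_abs α).symm
        _ < Real.sqrt (D / (k₁ * ζ)) ^ 2 := by
            apply pow_lt_pow_left₀ hαs (abs_nonneg α) (by norm_num)
        _ = D / (k₁ * ζ) := h0
    have hsq : 0 < α ^ 2 := by positivity
    have hk4 : k₁ * ζ * (α ^ 2 * α ^ 2) < D * α ^ 2 := by
      rw [lt_div_iff₀ (by positivity : (0:ℝ) < k₁ * ζ)] at hα2
      nlinarith
    have hcos : 1 - α ^ 2 / 2 ≤ Real.cos α := Real.one_sub_sq_div_two_le_cos
    have hsin : α ^ 2 - α ^ 4 / 4 < α * Real.sin α := wip_sin_mul_lower hα hα1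
    have hposR : 0 < ρ * ζ * (ζ + 2) * (Real.cos α - 1)
        + 2 * k₁ * ζ * (α * Real.sin α + Real.cos α - 1)
        + k₁ * ρ ^ 2 * (ζ + 2) * α ^ 2 := by
      have c1 : (0:ℝ) ≤ ρ * ζ * (ζ + 2) := by positivity
      have c2 : (0:ℝ) < 2 * k₁ * ζ := by positivity
      nlinarith [mul_le_mul_of_nonneg_left hcos c1,
        mul_lt_mul_of_pos_left hsin c2,
        mul_le_mul_of_nonneg_left hcos (le_of_lt c2)]
    rw [← sub_pos]
    have hfact : ((ζ + 2) * Real.cos α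
          + k₁ * (2 / ρ * (α * Real.sin α + Real.cos α)
              + α ^ 2 * ρ * (1 + 2 / ζ))
        - ((ζ + 2) * Real.cos 0
          + k₁ * (2 / ρ * ((0 : ℝ) * Real.sin 0 + Real.cos 0)
              + (0 : ℝ) ^ 2 * ρ * (1 + 2 / ζ)))) * (ρ * ζ)
        = ρ * ζ * (ζ + 2) * (Real.cos α - 1)
        + 2 * k₁ * ζ * (α * Real.sin α + Real.cos α - 1)
        + k₁ * ρ ^ 2 * (ζ + 2) * α ^ 2 := by
      simp only [Real.cos_zero, Real.sin_zero]
      field_simp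
      ring
    have hP : 0 < ((ζ + 2) * Real.cos α
          + k₁ * (2 / ρ * (α * Real.sin α + Real.cos α)
              + α ^ 2 * ρ * (1 + 2 / ζ))
        - ((ζ + 2) * Real.cos 0
          + k₁ * (2 / ρ * ((0 : ℝ) * Real.sin 0 + Real.cos 0)
              + (0 : ℝ) ^ 2 * ρ * (1 + 2 / ζ)))) * (ρ * ζ) := by
      rw [hfact]; exact hposR
    nlinarith [mul_pos hρ hζ]
end
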